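/- Lemma (limit of the regularization term as q → 1⁺ in the type-q hinge-loss reformulation). For q ∈ (1,∞), s ≥ 0 and λ > 0, set P_q(s,λ) := (q−1)·q^{−q/(q−1)}·λ^{−1/(q−1)}·s^{q/(q−1)}. Then, as q → 1 from above, P_q(s,λ) → 0 if s ≤ λ, and P_q(s,λ) → +∞ if s > λ; i.e., the limit is the characteristic function χ_{{s ≤ λ}} taking value 0 when s ≤ λ and +∞ otherwise. -/

import Mathlib

open Filter

/-- **Limit of the regularization term as `q → 1⁺`** in the type-`q` hinge-loss reformulation.
With `P q = (q-1) q^{-q/(q-1)} lam^{-1/(q-1)} s^{q/(q-1)}` for `s ≥ 0`, `lam > 0`: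
as `q → 1` from above, `P q → 0` if `s ≤ lam` and `P q → +∞` if `s > lam`, i.e. the limit is
the characteristic function `χ_{{s ≤ lam}}`. -/
theorem regularization_term_limit_q_to_one
    (s lam : ℝ) (hs : 0 ≤ s) (hlam : 0 < lam)
    (P : ℝ → ℝ)
    (hP : ∀ q : ℝ, P q =
      (q - 1) * q ^ (-(q / (q - 1))) * lam ^ (-(1 / (q - 1))) * s ^ (q / (q - 1))) :
    (s ≤ lam → Tendsto P (nhdsWithin 1 (Set.Ioi 1)) (nhds 0)) ∧
    (lam < s → Tendsto P (nhdsWithin 1 (Set.Ioi 1)) atTop) := by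
  have hIoi : ∀ᶠ q in nhdsWithin (1:ℝ) (Set.Ioi 1), (1:ℝ) < q :=
    eventually_mem_nhdsWithin
  have hsub : Tendsto (fun q : ℝ => q - 1) (nhdsWithin 1 (Set.Ioi 1))
      (nhdsWithin 0 (Set.Ioi 0)) := by
    apply tendsto_nhdsWithin_of_tendsto_nhds_of_eventually_within
    · have h : Tendsto (fun q : ℝ => q - 1) (nhds 1) (nhds 0) := by
        simpa using (continuous_sub_right (1:ℝ)).tendsto 1
      exact h.mono_left nhdsWithin_le_nhds
    · exact hIoi.mono fun q hq => by simpa using hq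
  have hinv : Tendsto (fun q : ℝ => (q - 1)⁻¹) (nhdsWithin 1 (Set.Ioi 1)) atTop :=
    tendsto_inv_nhdsGT_zero.comp hsub
  constructor
  · -- case s ≤ lam
    intro hsl
    have hnn : ∀ᶠ q in nhdsWithin (1:ℝ) (Set.Ioi 1), 0 ≤ P q := by
      filter_upwards [hIoi] with q hq
      have hq0 : (0:ℝ) < q := by linarith
      have hq1 : (0:ℝ) ≤ q - 1 := by linarith
      rw [hP q]
      exact mul_nonneg (mul_nonneg (mul_nonneg hq1 (Real.rpow_nonneg hq0.le _))
        (Real.rpow_nonneg hlam.le _)) (Real.rpow_nonneg hs _)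
    have hupper : ∀ᶠ q in nhdsWithin (1:ℝ) (Set.Ioi 1), P q ≤ (q - 1) * lam := by
      filter_upwards [hIoi] with q hq
      have hq0 : (0:ℝ) < q := by linarith
      have hq1 : (0:ℝ) < q - 1 := by linarith
      have he : 0 ≤ q / (q - 1) := by positivity
      have h1 : q ^ (-(q / (q - 1))) ≤ 1 :=
        Real.rpow_le_one_of_one_le_of_nonpos (by linarith) (by linarith)
      have h2 : s ^ (q / (q - 1)) ≤ lam ^ (q / (q - 1)) :=
        Real.rpow_le_rpow hs hsl he
      have h3 : lam ^ (-(1 / (q - 1))) * lam ^ (q / (q - 1)) = lam := by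
        rw [← Real.rpow_add hlam]
        have hx : -(1 / (q - 1)) + q / (q - 1) = 1 := by
          field_simp
          ring
        rw [hx, Real.rpow_one]
      rw [hP q]
      calc (q - 1) * q ^ (-(q / (q - 1))) * lam ^ (-(1 / (q - 1))) * s ^ (q / (q - 1))
          ≤ (q - 1) * 1 * lam ^ (-(1 / (q - 1))) * lam ^ (q / (q - 1)) := by
            gcongr <;>
              first
                | exact mul_nonneg (mul_nonneg hq1.le (Real.rpow_nonneg hq0.le _))
                    (Real.rpow_nonneg hlam.le _)
                | exact hq1.le
                | exact Real.rpow_nonneg hlam.le _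
                | assumption
        _ = (q - 1) * lam := by rw [mul_one, mul_assoc, h3]
    have hg : Tendsto (fun q : ℝ => (q - 1) * lam) (nhdsWithin 1 (Set.Ioi 1)) (nhds 0) := by
      have h : Tendsto (fun q : ℝ => (q - 1) * lam) (nhds 1) (nhds 0) := by
        simpa using ((continuous_sub_right (1:ℝ)).tendsto 1).mul_const lam
      exact h.mono_left nhdsWithin_le_nhds
    exact squeeze_zero' hnn hupper hg
  · -- case lam < s
    intro hls
    have hs' : (0:ℝ) < s := hlam.trans hls
    set L : ℝ := Real.log s - Real.log lam with hLdef
    have hL : 0 < L := sub_pos.mpr (Real.log_lt_log hlam hls)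
    -- N q = q (log s - log q) - log lam, continuous with N 1 = L
    have hN : Tendsto (fun q : ℝ => q * (Real.log s - Real.log q) - Real.log lam)
        (nhds 1) (nhds L) := by
      have hc : ContinuousAt (fun q : ℝ => q * (Real.log s - Real.log q) - Real.log lam) 1 :=
        ((continuousAt_id.mul
          (continuousAt_const.sub (Real.continuousAt_log one_ne_zero))).sub continuousAt_const)
      have := hc.tendsto
      simpa [Real.log_one] using this
    have hev : ∀ᶠ q in nhdsWithin (1:ℝ) (Set.Ioi 1),
        L / 2 < q * (Real.log s - Real.log q) - Real.log lam :=
      (hN.eventually (eventually_gt_nhds (by linarith : L / 2 < L))).filter_mono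
        nhdsWithin_le_nhds
    have hlower : ∀ᶠ q in nhdsWithin (1:ℝ) (Set.Ioi 1),
        (q - 1) * Real.exp (L / 2 * (q - 1)⁻¹) ≤ P q := by
      filter_upwards [hIoi, hev] with q hq hNq
      have hq0 : (0:ℝ) < q := by linarith
      have hq1 : (0:ℝ) < q - 1 := by linarith
      have hPeq : P q = (q - 1) *
          Real.exp ((q * (Real.log s - Real.log q) - Real.log lam) / (q - 1)) := by
        rw [hP q, Real.rpow_def_of_pos hq0, Real.rpow_def_of_pos hlam,
          Real.rpow_def_of_pos hs', mul_assoc, mul_assoc, ← Real.exp_add, ← Real.exp_add]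
        congr 1
        field_simp
        ring
      rw [hPeq]
      have hexp : L / 2 * (q - 1)⁻¹ ≤
          (q * (Real.log s - Real.log q) - Real.log lam) / (q - 1) := by
        rw [← div_eq_mul_inv]
        exact (div_le_div_iff_of_pos_right hq1).mpr hNq.le
      exact mul_le_mul_of_nonneg_left (Real.exp_le_exp.mpr hexp) hq1.le
    -- the lower bound tends to atTop
    have hf : Tendsto (fun x : ℝ => Real.exp (L / 2 * x) / x) atTop atTop := by
      have h0 : Tendsto (fun y : ℝ => Real.exp y / y) atTop atTop := by
        simpa using Real.tendsto_exp_div_pow_atTop 1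
      have h1 : Tendsto (fun x : ℝ => L / 2 * x) atTop atTop :=
        Tendsto.const_mul_atTop (by linarith) tendsto_id
      have h2 := h0.comp h1
      have h3 : Tendsto (fun x : ℝ => L / 2 * (Real.exp (L / 2 * x) / (L / 2 * x)))
          atTop atTop := h2.const_mul_atTop (by linarith)
      refine h3.congr' ?_
      filter_upwards [eventually_gt_atTop (0:ℝ)] with x hx
      have hL2 : L / 2 ≠ 0 := by positivity
      field_simp
    have hg : Tendsto (fun q : ℝ => (q - 1) * Real.exp (L / 2 * (q - 1)⁻¹))
        (nhdsWithin 1 (Set.Ioi 1)) atTop := by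
      have h2 := hf.comp hinv
      refine h2.congr' ?_
      filter_upwards [hIoi] with q hq
      have hq1 : q - 1 ≠ 0 := by intro h; linarith [hq]
      simp only [Function.comp]
      rw [div_eq_mul_inv, inv_inv, mul_comm]
    exact tendsto_atTop_mono' _ hlower hg
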